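/- 3 · Σ_{n=1}^∞ (63n² - 27n + 4) / C(6n, 3n) = 40·π·√3/81 + 4, where the series converges absolutely. -/

import Mathlib

set_option maxHeartbeats 2000000

open Real MeasureTheory Filter intervalIntegral Set Topology

lemma beta_nat (k : ℕ) :
    ∫ t in (0:ℝ)..1, (t*(1-t))^k = 1 / ((2*(k:ℝ)+1) * (Nat.choose (2*k) k : ℝ)) := by
  induction k with
  | zero => simp
  | succ k ih =>
    have hderiv : ∀ t ∈ uIcc (0:ℝ) 1,
        HasDerivAt (fun t : ℝ => (t*(1-t))^(k+1) * (2*t-1))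
          (-(((k:ℝ)+1)*(t*(1-t))^k) + (4*(k:ℝ)+6)*(t*(1-t))^(k+1)) t := by
      intro t _
      have hu : HasDerivAt (fun x : ℝ => x*(1-x)) (1-2*t) t := by
        have h := (hasDerivAt_id t).mul ((hasDerivAt_id t).const_sub 1)
        refine h.congr_deriv ?_; symm
        simp [id]
        ring
      have h1 : HasDerivAt (fun x : ℝ => (x*(1-x))^(k+1))
          ((k+1 : ℕ) * (t*(1-t))^(k+1-1) * (1-2*t)) t := hu.pow (k+1)
      have h2 : HasDerivAt (fun x : ℝ => 2*x-1) 2 t := by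
        simpa using ((hasDerivAt_id t).const_mul 2).sub_const 1
      have := h1.mul h2
      refine this.congr_deriv ?_; symm
      push_cast
      ring
    have hFTC := integral_eq_sub_of_hasDerivAt hderiv (by
      have : Continuous (fun t : ℝ => -(((k:ℝ)+1)*(t*(1-t))^k) + (4*(k:ℝ)+6)*(t*(1-t))^(k+1)) := by
        continuity
      exact this.intervalIntegrable 0 1)
    have hsplit : ∫ t in (0:ℝ)..1, (-(((k:ℝ)+1)*(t*(1-t))^k) + (4*(k:ℝ)+6)*(t*(1-t))^(k+1))
        = -(((k:ℝ)+1) * ∫ t in (0:ℝ)..1, (t*(1-t))^k)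
          + (4*(k:ℝ)+6) * ∫ t in (0:ℝ)..1, (t*(1-t))^(k+1) := by
      rw [intervalIntegral.integral_add, intervalIntegral.integral_neg,
        intervalIntegral.integral_const_mul, intervalIntegral.integral_const_mul]
      · exact (Continuous.intervalIntegrable (by continuity) 0 1).neg
      · exact Continuous.intervalIntegrable (by continuity) 0 1
    rw [hsplit, ih] at hFTC
    norm_num at hFTC
    have hC : (0:ℝ) < ((2*k).choose k : ℝ) := by
      exact_mod_cast Nat.choose_pos (by omega)
    have hC' : (0:ℝ) < ((2*(k+1)).choose (k+1) : ℝ) := by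
      exact_mod_cast Nat.choose_pos (by omega)
    have hrec : ((k:ℝ)+1) * ((2*(k+1)).choose (k+1) : ℝ) = 2*(2*(k:ℝ)+1) * ((2*k).choose k : ℝ) := by
      exact_mod_cast congrArg (Nat.cast (R := ℝ)) (Nat.succ_mul_centralBinom_succ k)
    have e1 : ((2*k).choose k : ℝ) ≠ 0 := hC.ne'
    have e2 : (2*(k:ℝ)+1) ≠ 0 := by positivity
    have hDpos : (0:ℝ) < (4*(k:ℝ)+6)*((2*(k:ℝ)+1)*((2*k).choose k : ℝ)) :=
      mul_pos (by positivity) (mul_pos (by positivity) hC)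
    have hD'pos : (0:ℝ) < (2*((k:ℕ):ℝ)+2+1)*((2*(k+1)).choose (k+1) : ℝ) :=
      mul_pos (by positivity) hC'
    field_simp [e1, e2] at hFTC
    have hI : ∫ t in (0:ℝ)..1, (t*(1-t))^(k+1)
        = ((k:ℝ)+1)/((4*(k:ℝ)+6)*((2*(k:ℝ)+1)*((2*k).choose k : ℝ))) := by
      rw [eq_div_iff hDpos.ne']
      linear_combination hFTC
    rw [hI]
    push_cast
    rw [div_eq_div_iff hDpos.ne' (by push_cast at hD'pos ⊢; linarith)]
    linear_combination (2*(k:ℝ)+3) * hrec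

lemma hasSum_aux {y : ℝ} (h0 : 0 ≤ y) (h1 : y < 1) :
    HasSum (fun n : ℕ => (63*((n:ℝ)+1)^2 - 27*((n:ℝ)+1) + 4) * (6*((n:ℝ)+1)+1) * y^(n+1))
      ((280*y + 1506*y^2 + 486*y^3 - 4*y^4) / (1-y)^4) := by
  have hy : (1:ℝ) - y ≠ 0 := by linarith
  set qq : ℕ → ℝ := fun N => (378*(N:ℝ)^3-99*(N:ℝ)^2-3*(N:ℝ)+4)*(1-y)^3
      + (1134*(N:ℝ)^2-198*(N:ℝ)-3)*(1-y)^2 + (1134*(N:ℝ)-99)*(1+y)*(1-y)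
      + 378*(1+4*y+y^2) with hqq
  have hterm : ∀ n : ℕ, 0 ≤ (63*((n:ℝ)+1)^2 - 27*((n:ℝ)+1) + 4) * (6*((n:ℝ)+1)+1) * y^(n+1) := by
    intro n
    have h2 : (0:ℝ) < 63*((n:ℝ)+1)^2 - 27*((n:ℝ)+1) + 4 := by
      nlinarith [sq_nonneg (42*((n:ℝ)+1)-9)]
    have h3 : (0:ℝ) ≤ y^(n+1) := pow_nonneg h0 _
    positivity
  rw [hasSum_iff_tendsto_nat_of_nonneg hterm]
  have hpart : ∀ N : ℕ, ∑ n ∈ Finset.range N,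
      (63*((n:ℝ)+1)^2 - 27*((n:ℝ)+1) + 4) * (6*((n:ℝ)+1)+1) * y^(n+1)
      = (280*y + 1506*y^2 + 486*y^3 - 4*y^4) / (1-y)^4 - y^(N+1) * qq N / (1-y)^4 := by
    intro N
    induction N with
    | zero =>
      simp only [Finset.range_zero, Finset.sum_empty, hqq]
      push_cast
      field_simp
      ring
    | succ N ih =>
      rw [Finset.sum_range_succ, ih, hqq]
      push_cast
      field_simp
      ring
  have htail : Tendsto (fun N : ℕ => y^(N+1) * qq N / (1-y)^4) atTop (𝓝 0) := by
    have habs : |y| < 1 := abs_lt.2 ⟨by linarith, h1⟩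
    have h3 := tendsto_pow_const_mul_const_pow_of_abs_lt_one 3 habs
    have h2 := tendsto_pow_const_mul_const_pow_of_abs_lt_one 2 habs
    have hh1 := tendsto_pow_const_mul_const_pow_of_abs_lt_one 1 habs
    have hh0 := tendsto_pow_const_mul_const_pow_of_abs_lt_one 0 habs
    set b3 : ℝ := 378*(1-y)^3 * y / (1-y)^4
    set b2 : ℝ := (-99*(1-y)^3 + 1134*(1-y)^2) * y / (1-y)^4
    set b1 : ℝ := (-3*(1-y)^3 - 198*(1-y)^2 + 1134*(1+y)*(1-y)) * y / (1-y)^4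
    set b0 : ℝ := (4*(1-y)^3 - 3*(1-y)^2 - 99*(1+y)*(1-y) + 378*(1+4*y+y^2)) * y / (1-y)^4
    have hcomb := (((h3.const_mul b3).add (h2.const_mul b2)).add (hh1.const_mul b1)).add
      (hh0.const_mul b0)
    norm_num at hcomb
    refine hcomb.congr fun N => ?_
    simp only [b3, b2, b1, b0, hqq]
    field_simp
    ring
  have := tendsto_const_nhds (x := (280*y + 1506*y^2 + 486*y^3 - 4*y^4) / (1-y)^4)
      (f := atTop (α := ℕ)) |>.sub htail
  norm_num at this
  refine Tendsto.congr (fun N => (hpart N).symm) ?_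
  convert this using 2

lemma summ_aux : Summable (fun n : ℕ =>
    |(63 * ((n : ℝ) + 1) ^ 2 - 27 * ((n : ℝ) + 1) + 4) /
      (Nat.choose (6 * (n + 1)) (3 * (n + 1)) : ℝ)|) := by
  have hgeo : Summable (fun n : ℕ => 500*((n:ℝ)^3*(1/64:ℝ)^n)) := by
    exact (summable_pow_mul_geometric_of_norm_lt_one (R := ℝ) 3 (r := (1/64:ℝ)) (by rw [norm_eq_abs]; rw [abs_of_pos]; norm_num; norm_num)).mul_left 500
  have hshift : Summable (fun n : ℕ => 500*(((n:ℝ)+1)^3*(1/64:ℝ)^(n+1))) := by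
    have := (summable_nat_add_iff 1).2 hgeo
    refine this.congr fun n => ?_
    push_cast
    ring
  apply Summable.of_nonneg_of_le (fun n => abs_nonneg _) _ hshift
  intro n
  set m : ℕ := n + 1 with hm
  have hcast : ((m:ℕ):ℝ) = (n:ℝ)+1 := by push_cast [hm]; ring
  have hmle : (1:ℝ) ≤ (m:ℝ) := by rw [hcast]; linarith [Nat.cast_nonneg (α := ℝ) n]
  have hC : (0:ℝ) < (Nat.choose (6*m) (3*m) : ℝ) := by
    exact_mod_cast Nat.choose_pos (by omega)
  have hnum : (0:ℝ) < 63*((n:ℝ)+1)^2 - 27*((n:ℝ)+1) + 4 := by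
    nlinarith [sq_nonneg (42*((n:ℝ)+1)-9)]
  rw [abs_of_nonneg (le_of_lt (div_pos hnum hC))]
  have h4 : ((64:ℝ))^m ≤ (6*(m:ℝ)+1) * (Nat.choose (6*m) (3*m) : ℝ) := by
    have hn := Nat.four_pow_le_two_mul_add_one_mul_central_binom (3*m)
    have hc : (4:ℕ)^(3*m) = 64^m := by rw [pow_mul]; norm_num
    have he : 2*(3*m) = 6*m := by ring
    rw [hc, he] at hn
    have := (Nat.cast_le (α := ℝ)).2 hn
    push_cast at this
    convert this using 2 <;> push_cast <;> ring
  have h64 : (0:ℝ) < 64^m := by positivity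
  rw [div_le_iff₀ hC, ← mul_le_mul_iff_left₀ h64]
  have hpow : ((1:ℝ)/64)^(n+1) * 64^m = 1 := by
    rw [hm, ← mul_pow]
    norm_num
  have step1 : (63*((n:ℝ)+1)^2 - 27*((n:ℝ)+1) + 4) * 64^m
      ≤ (63*((n:ℝ)+1)^2 - 27*((n:ℝ)+1) + 4) * ((6*(m:ℝ)+1) * (Nat.choose (6*m) (3*m) : ℝ)) :=
    mul_le_mul_of_nonneg_left h4 (le_of_lt hnum)
  have step2 : (63*((n:ℝ)+1)^2 - 27*((n:ℝ)+1) + 4) * ((6*(m:ℝ)+1) * (Nat.choose (6*m) (3*m) : ℝ))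
      ≤ 500*((n:ℝ)+1)^3 * (Nat.choose (6*m) (3*m) : ℝ) := by
    have hstep : (63*((n:ℝ)+1)^2 - 27*((n:ℝ)+1) + 4) * (6*(m:ℝ)+1) ≤ 500*((n:ℝ)+1)^3 := by
      rw [hcast]
      nlinarith [hmle, sq_nonneg ((n:ℝ)+1)]
    nlinarith [hC, hstep, hnum]
  calc (63*((n:ℝ)+1)^2 - 27*((n:ℝ)+1) + 4) * 64^m
      ≤ (63*((n:ℝ)+1)^2 - 27*((n:ℝ)+1) + 4) * ((6*(m:ℝ)+1) * (Nat.choose (6*m) (3*m) : ℝ)) := step1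
    _ ≤ 500*((n:ℝ)+1)^3 * (Nat.choose (6*m) (3*m) : ℝ) := step2
    _ = 500*(((n:ℝ)+1)^3*(1/64:ℝ)^(n+1)) * (Nat.choose (6*m) (3*m) : ℝ) * 64^m := by
        rw [show (500*(((n:ℝ)+1)^3*(1/64:ℝ)^(n+1)) * (Nat.choose (6*m) (3*m) : ℝ) * 64^m)
            = 500*((n:ℝ)+1)^3 * (Nat.choose (6*m) (3*m) : ℝ) * (((1:ℝ)/64)^(n+1) * 64^m) from by ring,
          hpow, mul_one]

noncomputable def Hanti (t : ℝ) : ℝ :=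
  (1-2*t) * (2 + ((-13/9 + (55/27*(t*(1-t)) - 100/27*(t*(1-t))^2)) / (1 - t*(1-t))^3
    + (-11/9 + ((-31/9)*(t*(1-t)) + ((-7)*(t*(1-t))^2 + ((-154/9)*(t*(1-t))^3
        + ((-170/9)*(t*(1-t))^4 + (-10/3)*(t*(1-t))^5)))))
      / (1 + (t*(1-t) + (t*(1-t))^2))^3))
  + 40*Real.sqrt 3/81 * Real.arctan ((2*t-1)/Real.sqrt 3)

lemma hasDerivAt_Hanti {t : ℝ} (h1 : 1 - t*(1-t) ≠ 0) :
    HasDerivAt Hanti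
      ((280*(t*(1-t))^3 + 1506*((t*(1-t))^3)^2 + 486*((t*(1-t))^3)^3 - 4*((t*(1-t))^3)^4)
        / (1-(t*(1-t))^3)^4) t := by
  have hs3 : Real.sqrt 3 ≠ 0 := by positivity
  have hs32 : Real.sqrt 3 ^ 2 = 3 := Real.sq_sqrt (by norm_num)
  have hq : (0:ℝ) < 1 + (t*(1-t) + (t*(1-t))^2) := by nlinarith [sq_nonneg (2*(t*(1-t))+1)]
  have hq3 : (1 + (t*(1-t) + (t*(1-t))^2))^3 ≠ 0 := by positivity
  have h13 : (1 - t*(1-t))^3 ≠ 0 := pow_ne_zero _ h1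
  have hid : HasDerivAt (fun x : ℝ => x) 1 t := hasDerivAt_id t
  have hu : HasDerivAt (fun x : ℝ => x*(1-x)) (1-2*t) t := by
    have h := hid.mul (hid.const_sub 1)
    refine h.congr_deriv ?_; symm
    ring
  have hVA := ((hu.const_mul (55/27 : ℝ)).sub ((hu.pow 2).const_mul (100/27))).const_add (-13/9 : ℝ)
  have hVB := ((hu.const_mul ((-31/9) : ℝ)).add (((hu.pow 2).const_mul ((-7) : ℝ)).add
      (((hu.pow 3).const_mul ((-154/9) : ℝ)).add (((hu.pow 4).const_mul ((-170/9) : ℝ)).add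
        ((hu.pow 5).const_mul ((-10/3) : ℝ)))))).const_add (-11/9 : ℝ)
  have hD1 := (hu.const_sub 1).pow 3
  have hD2 := ((hu.add (hu.pow 2)).const_add 1).pow 3
  have hW := ((hVA.div hD1 h13).add (hVB.div hD2 hq3)).const_add (2:ℝ)
  have hlin : HasDerivAt (fun x : ℝ => 1-2*x) (-(2*1)) t := (hid.const_mul 2).const_sub 1
  have hinner : HasDerivAt (fun x : ℝ => (2*x-1)/Real.sqrt 3) (2*1/Real.sqrt 3) t :=
    ((hid.const_mul 2).sub_const 1).div_const _
  have hss : Real.sqrt 3 * Real.sqrt 3 = 3 := Real.mul_self_sqrt (by norm_num)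
  have harct0 := (hinner.arctan).const_mul (40*Real.sqrt 3/81 : ℝ)
  have harct : HasDerivAt (fun x : ℝ => 40*Real.sqrt 3/81 * Real.arctan ((2*x-1)/Real.sqrt 3))
      (240/(81*(3+(2*t-1)^2))) t := by
    refine harct0.congr_deriv ?_; symm
    rw [div_pow, hs32]
    have h3t : (3:ℝ) + (2*t-1)^2 ≠ 0 := by positivity
    field_simp
    ring_nf
  have hfull := (hlin.mul hW).add harct
  have hfun : Hanti = (fun x : ℝ => (1-2*x) * (2 + ((-13/9 + (55/27*(x*(1-x)) - 100/27*(x*(1-x))^2)) / (1 - x*(1-x))^3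
    + (-11/9 + ((-31/9)*(x*(1-x)) + ((-7)*(x*(1-x))^2 + ((-154/9)*(x*(1-x))^3
        + ((-170/9)*(x*(1-x))^4 + (-10/3)*(x*(1-x))^5)))))
      / (1 + (x*(1-x) + (x*(1-x))^2))^3))
  + 40*Real.sqrt 3/81 * Real.arctan ((2*x-1)/Real.sqrt 3)) := rfl
  rw [hfun]
  have h1u3 : (1:ℝ) - (t*(1-t))^3 ≠ 0 := by
    have he : (1:ℝ) - (t*(1-t))^3 = (1 - t*(1-t))*(1+(t*(1-t)+(t*(1-t))^2)) := by ring
    rw [he]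
    exact mul_ne_zero h1 hq.ne'
  have h3t : (3:ℝ) + (2*t-1)^2 ≠ 0 := by positivity
  refine hfull.congr_deriv ?_; symm
  simp only [Pi.pow_apply, Pi.add_apply, Pi.sub_apply, Pi.mul_apply, Pi.div_apply]
  have hA : (1:ℝ) - t^3*(1-t)^3 ≠ 0 := by rw [← mul_pow]; exact h1u3
  have hB : (1:ℝ) + t*(1-t)*(1+t*(1-t)) ≠ 0 := by
    have he : (1:ℝ) + t*(1-t)*(1+t*(1-t)) = 1 + (t*(1-t) + (t*(1-t))^2) := by ring
    rw [he]; exact hq.ne'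
  field_simp
  ring

theorem stmt11 :
    Summable (fun n : ℕ =>
      |(63 * ((n : ℝ) + 1) ^ 2 - 27 * ((n : ℝ) + 1) + 4) /
        (Nat.choose (6 * (n + 1)) (3 * (n + 1)) : ℝ)|) ∧
    3 * ∑' n : ℕ,
        (63 * ((n : ℝ) + 1) ^ 2 - 27 * ((n : ℝ) + 1) + 4) /
          (Nat.choose (6 * (n + 1)) (3 * (n + 1)) : ℝ) =
      40 * π * Real.sqrt 3 / 81 + 4 := by
  refine ⟨summ_aux, ?_⟩
  set F : ℕ → ℝ → ℝ := fun n t => (63*((n:ℝ)+1)^2 - 27*((n:ℝ)+1) + 4) * (6*((n:ℝ)+1)+1)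
      * ((t*(1-t))^3)^(n+1) with hF
  have hupos : ∀ t : ℝ, t ∈ Set.Icc (0:ℝ) 1 → 0 ≤ t*(1-t) ∧ t*(1-t) ≤ 1/4 := by
    intro t ⟨h0, h1⟩
    constructor
    · exact mul_nonneg h0 (by linarith)
    · nlinarith [sq_nonneg (2*t-1)]
  have hden_pos : ∀ t : ℝ, (0:ℝ) < 1 - (t*(1-t))^3 := by
    intro t
    have h1 : t*(1-t) ≤ 1/4 := by nlinarith [sq_nonneg (2*t-1)]
    have h2 : (0:ℝ) < 1 - t*(1-t) := by linarith
    have h3 : (0:ℝ) < (2*(t*(1-t))+1)^2+3 := by positivity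
    nlinarith [mul_pos h2 h3]
  have hCpos : ∀ n : ℕ, (0:ℝ) < (Nat.choose (6*(n+1)) (3*(n+1)) : ℝ) := by
    intro n
    exact_mod_cast Nat.choose_pos (by omega)
  have hnum_pos : ∀ n : ℕ, (0:ℝ) < 63*((n:ℝ)+1)^2 - 27*((n:ℝ)+1) + 4 := by
    intro n
    nlinarith [sq_nonneg (42*((n:ℝ)+1)-9)]
  -- each term equals an integral
  have hterm_int : ∀ n : ℕ,
      (63*((n:ℝ)+1)^2 - 27*((n:ℝ)+1) + 4) / (Nat.choose (6*(n+1)) (3*(n+1)) : ℝ)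
      = ∫ t in Set.Ioc (0:ℝ) 1, F n t := by
    intro n
    rw [← intervalIntegral.integral_of_le (by norm_num : (0:ℝ) ≤ 1)]
    have hfe : (fun t : ℝ => F n t)
        = fun t : ℝ => ((63*((n:ℝ)+1)^2 - 27*((n:ℝ)+1) + 4) * (6*((n:ℝ)+1)+1))
            * (t*(1-t))^(3*(n+1)) := by
      funext t
      rw [hF]
      simp only []
      rw [pow_mul]
    rw [hfe, intervalIntegral.integral_const_mul, beta_nat (3*(n+1))]
    have he : 2*(3*(n+1)) = 6*(n+1) := by ring
    rw [he]
    have hC := hCpos n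
    rw [div_eq_iff hC.ne']
    push_cast
    field_simp
    ring
  -- integrability
  have hcontF : ∀ n : ℕ, Continuous (F n) := by
    intro n
    apply Continuous.mul continuous_const
    exact ((continuous_id.mul (continuous_const.sub continuous_id)).pow 3).pow (n+1)
  have hInt : ∀ i : ℕ, IntegrableOn (F i) (Set.Ioc (0:ℝ) 1) volume := by
    intro i
    exact (hcontF i).integrableOn_Ioc
  have hFnonneg : ∀ n : ℕ, ∀ t ∈ Set.Ioc (0:ℝ) 1, 0 ≤ F n t := by
    intro n t ht
    have h := hupos t ⟨le_of_lt ht.1, ht.2⟩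
    have := hnum_pos n
    have hp : (0:ℝ) ≤ ((t*(1-t))^3)^(n+1) := pow_nonneg (pow_nonneg h.1 3) _
    exact mul_nonneg (mul_nonneg (le_of_lt (hnum_pos n)) (by positivity)) hp
  have hnorm_sum : Summable (fun i : ℕ => ∫ t in Set.Ioc (0:ℝ) 1, ‖F i t‖) := by
    apply summ_aux.congr
    intro i
    have heq : ∀ t ∈ Set.Ioc (0:ℝ) 1, ‖F i t‖ = F i t := by
      intro t ht
      exact norm_of_nonneg (hFnonneg i t ht)
    rw [setIntegral_congr_fun measurableSet_Ioc heq, ← hterm_int i,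
      abs_of_nonneg (le_of_lt (div_pos (hnum_pos i) (hCpos i)))]
  have hswap := MeasureTheory.integral_tsum_of_summable_integral_norm hInt hnorm_sum
  -- pointwise value of the series
  have hpt : ∀ t ∈ Set.Ioc (0:ℝ) 1, (∑' n : ℕ, F n t)
      = (280*(t*(1-t))^3 + 1506*((t*(1-t))^3)^2 + 486*((t*(1-t))^3)^3 - 4*((t*(1-t))^3)^4)
          / (1-(t*(1-t))^3)^4 := by
    intro t ht
    have h := hupos t ⟨le_of_lt ht.1, ht.2⟩
    have hy0 : (0:ℝ) ≤ (t*(1-t))^3 := pow_nonneg h.1 3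
    have hy1 : (t*(1-t))^3 < 1 := by linarith [hden_pos t]
    have hh := (hasSum_aux hy0 hy1).tsum_eq
    rw [hF]
    convert hh using 2 <;> ring
  -- the tsum equals the integral of the closed form
  have hmain : ∑' n : ℕ, (63*((n:ℝ)+1)^2 - 27*((n:ℝ)+1) + 4)
      / (Nat.choose (6*(n+1)) (3*(n+1)) : ℝ)
      = ∫ t in (0:ℝ)..1,
        (280*(t*(1-t))^3 + 1506*((t*(1-t))^3)^2 + 486*((t*(1-t))^3)^3 - 4*((t*(1-t))^3)^4)
          / (1-(t*(1-t))^3)^4 := by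
    rw [intervalIntegral.integral_of_le (by norm_num : (0:ℝ) ≤ 1)]
    calc ∑' n : ℕ, (63*((n:ℝ)+1)^2 - 27*((n:ℝ)+1) + 4)
        / (Nat.choose (6*(n+1)) (3*(n+1)) : ℝ)
        = ∑' n : ℕ, ∫ t in Set.Ioc (0:ℝ) 1, F n t := by
          exact tsum_congr hterm_int
      _ = ∫ t in Set.Ioc (0:ℝ) 1, (∑' n : ℕ, F n t) := hswap
      _ = _ := setIntegral_congr_fun measurableSet_Ioc hpt
  -- FTC
  have hftc : ∫ t in (0:ℝ)..1,
      (280*(t*(1-t))^3 + 1506*((t*(1-t))^3)^2 + 486*((t*(1-t))^3)^3 - 4*((t*(1-t))^3)^4)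
        / (1-(t*(1-t))^3)^4 = Hanti 1 - Hanti 0 := by
    apply intervalIntegral.integral_eq_sub_of_hasDerivAt
    · intro t ht
      apply hasDerivAt_Hanti
      rw [uIcc_of_le (by norm_num : (0:ℝ) ≤ 1)] at ht
      have h := hupos t ht
      linarith [h.2]
    · have hu3 : Continuous fun t : ℝ => (t*(1-t))^3 :=
        (continuous_id.mul (continuous_const.sub continuous_id)).pow 3
      have hnumc : Continuous fun t : ℝ =>
          280*(t*(1-t))^3 + 1506*((t*(1-t))^3)^2 + 486*((t*(1-t))^3)^3 - 4*((t*(1-t))^3)^4 :=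
        (((continuous_const.mul hu3).add (continuous_const.mul (hu3.pow 2))).add
          (continuous_const.mul (hu3.pow 3))).sub (continuous_const.mul (hu3.pow 4))
      have hdenc : Continuous fun t : ℝ => (1-(t*(1-t))^3)^4 :=
        (continuous_const.sub hu3).pow 4
      exact (hnumc.div hdenc fun t => pow_ne_zero 4 (hden_pos t).ne').intervalIntegrable 0 1
  -- endpoint values
  have harc : Real.arctan (Real.sqrt 3)⁻¹ = π/6 := by
    rw [← one_div, ← Real.tan_pi_div_six, Real.arctan_tan]
    · linarith [Real.pi_pos]
    · linarith [Real.pi_pos]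
  have hH1 : Hanti 1 = 2/3 + 40*Real.sqrt 3/81 * (π/6) := by
    simp only [Hanti]
    norm_num
  have hH0 : Hanti 0 = -(2/3) - 40*Real.sqrt 3/81 * (π/6) := by
    simp only [Hanti]
    norm_num
    rw [neg_div, one_div, Real.arctan_neg, harc]
    try ring
  rw [hmain, hftc, hH1, hH0]
  ring
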